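/- Let σ be a permutation of [n] with d descents whose last entry is 1. Then the maximum possible weight of such σ is (d−1)(n−d−1). -/

import Mathlib

/-- Number of descents of a sequence. -/
def desL : List ℕ → ℕ
  | a :: b :: t => (if b < a then 1 else 0) + desL (b :: t)
  | _ => 0

/-- Repeatedly split a sequence just after its maximum element. -/
def splitLeftAux : ℕ → List ℕ → List (List ℕ)
  | 0, _ => []
  | _, [] => []
  | fuel + 1, l =>
    let i := l.idxOf (l.foldr Nat.max 0)
    l.take (i + 1) :: splitLeftAux fuel (l.drop (i + 1))

def splitLeft (l : List ℕ) : List (List ℕ) := splitLeftAux l.length l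

/-- Split a sequence at its minimum element, splitting the left part
repeatedly just after its maximum. -/
def splitAll (l : List ℕ) : List (List ℕ) :=
  let m := l.foldr Nat.min (l.headD 0)
  let i := l.idxOf m
  splitLeft (l.take i) ++ [[m]] ++ [l.drop (i + 1)]

/-- The weight of a sequence of distinct naturals (fuelled version; the fuel
`(length+2)^2` in `weightL` is more than the recursion depth ever needed). -/
def weightAux : ℕ → List ℕ → ℕ
  | 0, _ => 0
  | fuel + 1, l =>
    if l.length ≤ 1 ∨ l.Pairwise (· < ·) then 0
    else ((splitAll (l ++ [l.foldr Nat.max 0 + 1])).map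
      (fun p => desL p + weightAux fuel p)).sum

/-- The weight of a permutation viewed as a sequence. -/
def weightL (l : List ℕ) : ℕ := weightAux ((l.length + 2) ^ 2) l

/-- `l` is a permutation of `[n] = {1,…,n}` written as a sequence. -/
def IsPermList (n : ℕ) (l : List ℕ) : Prop := l.Perm (List.range' 1 n)


/-! ### desL lemmas -/

lemma desL_nil : desL [] = 0 := rfl
lemma desL_single (a : ℕ) : desL [a] = 0 := rfl
lemma desL_cons_cons (a b : ℕ) (t : List ℕ) :
    desL (a :: b :: t) = (if b < a then 1 else 0) + desL (b :: t) := rfl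

lemma desL_append_cons : ∀ (xs : List ℕ) (a : ℕ) (ys : List ℕ),
    desL (xs ++ a :: ys) = desL (xs ++ [a]) + desL (a :: ys)
  | [], a, ys => by simp [desL]
  | [x], a, ys => by
    show desL (x :: a :: ys) = desL [x, a] + desL (a :: ys)
    rw [desL_cons_cons, desL_cons_cons, desL_single]; omega
  | x :: y :: xs, a, ys => by
    have ih := desL_append_cons (y :: xs) a ys
    show desL (x :: y :: (xs ++ a :: ys)) = desL (x :: y :: (xs ++ [a])) + _
    rw [desL_cons_cons, desL_cons_cons]
    have e1 : (y :: (xs ++ a :: ys)) = (y :: xs) ++ a :: ys := rfl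
    have e2 : (y :: (xs ++ [a])) = (y :: xs) ++ [a] := rfl
    rw [e1, e2, ih]; omega

lemma desL_cons_le (a : ℕ) (t : List ℕ) : desL (a :: t) ≤ t.length := by
  induction t generalizing a with
  | nil => simp [desL]
  | cons b t ih =>
    have := ih b
    rw [desL_cons_cons]
    simp only [List.length_cons]
    split <;> omega

lemma desL_chain' : ∀ {l : List ℕ}, List.IsChain (· < ·) l → desL l = 0
  | [], _ => rfl
  | [a], _ => rfl
  | a :: b :: t, h => by
    rw [List.isChain_cons_cons] at h
    rw [desL_cons_cons, if_neg (by omega : ¬ b < a), desL_chain' h.2]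

lemma desL_concat_lt {xs : List ℕ} {a : ℕ} (h : ∀ x ∈ xs, x < a) :
    desL (xs ++ [a]) = desL xs := by
  induction xs with
  | nil => rfl
  | cons x xs ih =>
    cases xs with
    | nil =>
      show desL (x :: [a]) = _
      rw [desL_cons_cons, if_neg (by have := h x (by simp); omega : ¬ a < x)]; rfl
    | cons y ys =>
      have h2 : ∀ z ∈ y :: ys, z < a := fun z hz => h z (by simp [hz])
      show desL (x :: ((y :: ys) ++ [a])) = desL (x :: y :: ys)
      rw [show (x :: ((y :: ys) ++ [a])) = x :: y :: (ys ++ [a]) from rfl,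
        desL_cons_cons, desL_cons_cons,
        show (y :: (ys ++ [a])) = (y :: ys) ++ [a] from rfl, ih h2]

lemma desL_concat_min {xs : List ℕ} {a : ℕ} (hne : xs ≠ []) (h : ∀ x ∈ xs, a < x) :
    desL (xs ++ [a]) = desL xs + 1 := by
  induction xs with
  | nil => simp at hne
  | cons x xs ih =>
    cases xs with
    | nil =>
      show desL (x :: [a]) = _
      rw [desL_cons_cons, if_pos (h x (by simp))]; rfl
    | cons y ys =>
      have h2 : ∀ z ∈ y :: ys, a < z := fun z hz => h z (by simp [hz])
      show desL (x :: ((y :: ys) ++ [a])) = desL (x :: y :: ys) + 1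
      rw [show (x :: ((y :: ys) ++ [a])) = x :: y :: (ys ++ [a]) from rfl,
        desL_cons_cons, desL_cons_cons,
        show (y :: (ys ++ [a])) = (y :: ys) ++ [a] from rfl, ih (by simp) h2]
      omega

lemma desL_cons_min {ys : List ℕ} {a : ℕ} (h : ∀ x ∈ ys, a < x) :
    desL (a :: ys) = desL ys := by
  cases ys with
  | nil => rfl
  | cons y ys =>
    rw [desL_cons_cons, if_neg (by have := h y (by simp); omega : ¬ y < a)]; omega

lemma desL_append_all_lt {xs ys : List ℕ} (h : ∀ x ∈ xs, ∀ y ∈ ys, x < y) :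
    desL (xs ++ ys) = desL xs + desL ys := by
  cases ys with
  | nil => simp [desL_nil]
  | cons a ys' =>
    rw [desL_append_cons, desL_concat_lt (fun x hx => h x hx a (by simp))]

/-! ### foldr max / min -/

lemma foldr_max_le (l : List ℕ) (c : ℕ) : ∀ x ∈ l, x ≤ l.foldr Nat.max c := by
  induction l with
  | nil => simp
  | cons a t ih =>
    intro x hx
    rcases List.mem_cons.1 hx with rfl | hx
    · exact Nat.le_max_left _ _
    · exact le_trans (ih x hx) (Nat.le_max_right _ _)

lemma foldr_max_eq {l : List ℕ} {M : ℕ} (hM : M ∈ l) (hle : ∀ x ∈ l, x ≤ M) :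
    l.foldr Nat.max 0 = M := by
  have h1 : l.foldr Nat.max 0 ≤ M := by
    clear hM
    induction l with
    | nil => simp
    | cons a t ih =>
      simp only [List.foldr_cons]
      exact Nat.max_le.2 ⟨hle a (by simp), ih (fun x hx => hle x (by simp [hx]))⟩
  have h2 : M ≤ l.foldr Nat.max 0 := foldr_max_le l 0 M hM
  omega

lemma foldr_min_eq {l : List ℕ} {m c : ℕ} (hm : m ∈ l) (hle : ∀ x ∈ l, m ≤ x)
    (hc : m ≤ c) : l.foldr Nat.min c = m := by
  have h1 : m ≤ l.foldr Nat.min c := by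
    clear hm
    induction l with
    | nil => simpa
    | cons a t ih =>
      simp only [List.foldr_cons]
      exact Nat.le_min.2 ⟨hle a (by simp), ih (fun x hx => hle x (by simp [hx]))⟩
  have h2 : l.foldr Nat.min c ≤ m := by
    have : ∀ x ∈ l, l.foldr Nat.min c ≤ x := by
      clear hm h1
      induction l with
      | nil => simp
      | cons a t ih =>
        intro x hx
        simp only [List.foldr_cons]
        rcases List.mem_cons.1 hx with rfl | hx'
        · exact Nat.min_le_left _ _
        · exact le_trans (Nat.min_le_right _ _)
            (ih (fun y hy => hle y (by simp [hy])) x hx')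
    exact this m hm
  omega

/-! ### weightAux basics -/

lemma weightAux_of_short_or_sorted {l : List ℕ}
    (h : l.length ≤ 1 ∨ l.Pairwise (· < ·)) : ∀ f, weightAux f l = 0
  | 0 => rfl
  | f + 1 => by rw [weightAux, if_pos h]

lemma weightAux_single (a : ℕ) (f : ℕ) : weightAux f [a] = 0 :=
  weightAux_of_short_or_sorted (Or.inl (by simp)) f

lemma sorted_of_chain' {l : List ℕ} (h : List.IsChain (· < ·) l) :
    l.Pairwise (· < ·) :=
  List.isChain_iff_pairwise.1 h

/-! ### splitLeft lemmas -/

lemma splitLeftAux_congr : ∀ (f g : ℕ) (l : List ℕ), l.length ≤ f → l.length ≤ g →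
    splitLeftAux f l = splitLeftAux g l
  | 0, 0, l, _, _ => rfl
  | 0, g + 1, l, hf, _ => by
    interval_cases hl : l.length
    · rw [List.length_eq_zero_iff] at hl; subst hl; rfl
  | f + 1, 0, l, _, hg => by
    interval_cases hl : l.length
    · rw [List.length_eq_zero_iff] at hl; subst hl; rfl
  | f + 1, g + 1, l, hf, hg => by
    cases l with
    | nil => rfl
    | cons a t =>
      rw [splitLeftAux, splitLeftAux]
      case x_2 => simp
      case x_2 => simp
      have hd : ((a :: t).drop ((a :: t).idxOf ((a :: t).foldr Nat.max 0) + 1)).length ≤ f ∧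
          ((a :: t).drop ((a :: t).idxOf ((a :: t).foldr Nat.max 0) + 1)).length ≤ g := by
        constructor <;> · rw [List.length_drop]; simp at hf hg ⊢; omega
      rw [splitLeftAux_congr f g _ hd.1 hd.2]

lemma splitLeft_eq_cons {s t : List ℕ} {M : ℕ}
    (hs : ∀ x ∈ s, x < M) (ht : ∀ x ∈ t, x < M) :
    splitLeft (s ++ M :: t) = (s ++ [M]) :: splitLeft t := by
  have hMmem : M ∈ s ++ M :: t := by simp
  have hMle : ∀ x ∈ s ++ M :: t, x ≤ M := by
    intro x hx
    rcases List.mem_append.1 hx with hx | hx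
    · exact le_of_lt (hs x hx)
    · rcases List.mem_cons.1 hx with rfl | hx
      · rfl
      · exact le_of_lt (ht x hx)
  have hfold : (s ++ M :: t).foldr Nat.max 0 = M := foldr_max_eq hMmem hMle
  have hidx : (s ++ M :: t).idxOf M = s.length := by
    rw [List.idxOf_append_of_notMem (fun hM => lt_irrefl M (hs M hM))]
    simp
  have hlen : (s ++ M :: t).length = s.length + 1 + t.length := by simp; omega
  rw [splitLeft, hlen]
  rw [show s.length + 1 + t.length = (s.length + t.length) + 1 by omega, splitLeftAux]
  case x_2 => simp
  simp only [hfold, hidx]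
  rw [List.take_append, List.take_of_length_le (by omega),
    List.take_cons (by omega), List.drop_append]
  simp only [show s.length + 1 - s.length = 1 by omega]
  rw [List.drop_of_length_le (by omega)]
  simp only [List.take_zero, List.nil_append, List.drop_succ_cons, List.drop_zero]
  rw [splitLeftAux_congr _ t.length t (by omega) le_rfl]
  rfl

/-! ### decompositions -/

lemma exists_mem_le {s : List ℕ} (hne : s ≠ []) : ∃ μ ∈ s, ∀ x ∈ s, μ ≤ x := by
  induction s with
  | nil => simp at hne
  | cons a t ih =>
    cases t with
    | nil => exact ⟨a, by simp⟩
    | cons b t' =>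
      obtain ⟨μ, hμ, hle⟩ := ih (by simp)
      rcases le_total a μ with h | h
      · exact ⟨a, by simp, fun x hx => by
          rcases List.mem_cons.1 hx with rfl | hx
          · rfl
          · exact le_trans h (hle x hx)⟩
      · exact ⟨μ, by simp [hμ], fun x hx => by
          rcases List.mem_cons.1 hx with rfl | hx
          · exact h
          · exact hle x hx⟩

lemma exists_mem_ge {s : List ℕ} (hne : s ≠ []) : ∃ M ∈ s, ∀ x ∈ s, x ≤ M := by
  induction s with
  | nil => simp at hne
  | cons a t ih =>
    cases t with
    | nil => exact ⟨a, by simp⟩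
    | cons b t' =>
      obtain ⟨M, hM, hle⟩ := ih (by simp)
      rcases le_total M a with h | h
      · exact ⟨a, by simp, fun x hx => by
          rcases List.mem_cons.1 hx with rfl | hx
          · rfl
          · exact le_trans (hle x hx) h⟩
      · exact ⟨M, by simp [hM], fun x hx => by
          rcases List.mem_cons.1 hx with rfl | hx
          · exact h
          · exact hle x hx⟩

lemma exists_min_split {s : List ℕ} (hne : s ≠ []) (hnd : s.Nodup) :
    ∃ s1 μ s2, s = s1 ++ μ :: s2 ∧ (∀ x ∈ s1, μ < x) ∧ (∀ x ∈ s2, μ < x) ∧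
      (∀ x ∈ s, μ ≤ x) ∧ μ ∉ s1 := by
  obtain ⟨μ, hμ, hle⟩ := exists_mem_le hne
  obtain ⟨s1, s2, rfl⟩ := List.append_of_mem hμ
  have h1 : μ ∉ s1 ∧ μ ∉ s2 := by
    have := hnd
    simp only [List.nodup_append, List.nodup_cons] at this
    refine ⟨fun h => ?_, this.2.1.1⟩
    exact this.2.2 μ h μ (by simp) rfl
  refine ⟨s1, μ, s2, rfl, fun x hx => ?_, fun x hx => ?_, hle, h1.1⟩
  · have := hle x (by simp [hx])
    rcases eq_or_lt_of_le this with rfl | h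
    · exact absurd hx h1.1
    · exact h
  · have := hle x (by simp [hx])
    rcases eq_or_lt_of_le this with rfl | h
    · exact absurd hx h1.2
    · exact h

lemma exists_max_split {s : List ℕ} (hne : s ≠ []) (hnd : s.Nodup) :
    ∃ s1 M s2, s = s1 ++ M :: s2 ∧ (∀ x ∈ s1, x < M) ∧ (∀ x ∈ s2, x < M) := by
  obtain ⟨M, hM, hle⟩ := exists_mem_ge hne
  obtain ⟨s1, s2, rfl⟩ := List.append_of_mem hM
  have h1 : M ∉ s1 ∧ M ∉ s2 := by
    have := hnd
    simp only [List.nodup_append, List.nodup_cons] at this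
    refine ⟨fun h => ?_, this.2.1.1⟩
    exact this.2.2 M h M (by simp) rfl
  refine ⟨s1, M, s2, rfl, fun x hx => ?_, fun x hx => ?_⟩
  · have := hle x (by simp [hx])
    rcases eq_or_lt_of_le this with rfl | h
    · exact absurd hx h1.1
    · exact h
  · have := hle x (by simp [hx])
    rcases eq_or_lt_of_le this with rfl | h
    · exact absurd hx h1.2
    · exact h

/-! ### blockSum -/

def blockSum (f : ℕ) (l : List ℕ) : ℕ :=
  ((splitLeft l).map (fun p => desL p + weightAux f p)).sum

lemma blockSum_nil (f : ℕ) : blockSum f [] = 0 := rfl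

lemma blockSum_decreasing (f : ℕ) : ∀ {l : List ℕ}, List.IsChain (· > ·) l →
    blockSum f l = 0
  | [], _ => rfl
  | M :: t, h => by
    have ht : ∀ x ∈ t, x < M := by
      have := List.isChain_iff_pairwise.1 h
      intro x hx
      exact (List.pairwise_cons.1 this).1 x hx
    have := splitLeft_eq_cons (s := []) (t := t) (M := M) (by simp) ht
    simp only [List.nil_append] at this
    rw [blockSum, this]
    simp only [List.map_cons, List.sum_cons, desL_single, weightAux_single]
    have ih := blockSum_decreasing f (l := t) (h.tail)
    rw [blockSum] at ih
    omega

/-! ### splitAll computation -/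

lemma headD_mem {l : List ℕ} (h : l ≠ []) : l.headD 0 ∈ l := by
  cases l with
  | nil => simp at h
  | cons a t => simp

lemma splitAll_eq {s1 rest : List ℕ} {μ : ℕ} (hμ1 : μ ∉ s1)
    (hle : ∀ x ∈ s1 ++ μ :: rest, μ ≤ x) :
    splitAll (s1 ++ μ :: rest) = splitLeft s1 ++ [[μ]] ++ [rest] := by
  have hne : s1 ++ μ :: rest ≠ [] := by simp
  have hhead : μ ≤ (s1 ++ μ :: rest).headD 0 := hle _ (headD_mem hne)
  have hmin : (s1 ++ μ :: rest).foldr Nat.min ((s1 ++ μ :: rest).headD 0) = μ :=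
    foldr_min_eq (by simp) hle hhead
  have hidx : (s1 ++ μ :: rest).idxOf μ = s1.length := by
    rw [List.idxOf_append_of_notMem hμ1]; simp
  rw [splitAll]
  simp only [hmin, hidx]
  congr 1
  · congr 1
    rw [List.take_left]
  · congr 1
    rw [show s1 ++ μ :: rest = (s1 ++ [μ]) ++ rest by simp,
      List.drop_left' (by simp)]

/-! ### arithmetic helpers -/

lemma arith1 {a q b r D : ℕ} (haq : a = 0 ∧ q = 0 ∨ a + 1 ≤ q)
    (hbr : b = 0 ∧ r = 0 ∨ b + 1 ≤ r)
    (hD : (r = 0 ∧ D = a) ∨ (1 ≤ r ∧ D = a + 1 + b)) :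
    a + a * (q - 1 - a) + b * (r - 1 - b) ≤ D * (q + 1 + r - 1 - D) := by
  rcases hD with ⟨hr, hDe⟩ | ⟨hr, hDe⟩ <;> rw [hDe]
  · subst hr
    have hb : b = 0 := by omega
    subst hb
    rcases haq with ⟨rfl, rfl⟩ | h
    · simp
    · obtain ⟨X, hX⟩ : ∃ X, q = a + 1 + X := ⟨q - 1 - a, by omega⟩
      subst hX
      have e1 : a + 1 + X - 1 - a = X := by omega
      have e2 : a + 1 + X + 1 + 0 - 1 - a = X + 1 := by omega
      rw [e1, e2]
      nlinarith
  · have hbr' : b + 1 ≤ r := by omega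
    obtain ⟨Y, hY⟩ : ∃ Y, r = b + 1 + Y := ⟨r - 1 - b, by omega⟩
    subst hY
    rcases haq with ⟨rfl, rfl⟩ | h
    · have e1 : (0:ℕ) - 1 - 0 = 0 := by omega
      have e2 : b + 1 + Y - 1 - b = Y := by omega
      have e3 : 0 + 1 + (b + 1 + Y) - 1 - (0 + 1 + b) = Y := by omega
      rw [e1, e2, e3]
      nlinarith
    · obtain ⟨X, hX⟩ : ∃ X, q = a + 1 + X := ⟨q - 1 - a, by omega⟩
      subst hX
      have e1 : a + 1 + X - 1 - a = X := by omega
      have e2 : b + 1 + Y - 1 - b = Y := by omega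
      have e3 : a + 1 + X + 1 + (b + 1 + Y) - 1 - (a + 1 + b) = X + Y + 1 := by omega
      rw [e1, e2, e3]
      nlinarith

lemma arith2 {a q b r D : ℕ} (haq : a = 0 ∧ q = 0 ∨ a + 1 ≤ q)
    (hbr : b = 0 ∧ r = 0 ∨ b + 1 ≤ r)
    (hD : (q = 0 ∧ D = b) ∨ (1 ≤ q ∧ D = a + 1 + b)) :
    a * (q - 1 - a) + (b + b * (r - 1 - b)) ≤ D * (q + 1 + r - 1 - D) := by
  rcases hD with ⟨hq, hDe⟩ | ⟨hq, hDe⟩ <;> rw [hDe]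
  · subst hq
    have ha : a = 0 := by omega
    subst ha
    rcases hbr with ⟨rfl, rfl⟩ | h
    · simp
    · obtain ⟨Y, hY⟩ : ∃ Y, r = b + 1 + Y := ⟨r - 1 - b, by omega⟩
      subst hY
      have e2 : b + 1 + Y - 1 - b = Y := by omega
      have e3 : 0 + 1 + (b + 1 + Y) - 1 - b = Y + 1 := by omega
      rw [e2, e3]
      nlinarith
  · have hq' : a + 1 ≤ q := by omega
    obtain ⟨X, hX⟩ : ∃ X, q = a + 1 + X := ⟨q - 1 - a, by omega⟩
    subst hX
    have e1 : a + 1 + X - 1 - a = X := by omega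
    rcases hbr with ⟨rfl, rfl⟩ | h
    · have e2 : (0:ℕ) - 1 - 0 = 0 := by omega
      have e3 : a + 1 + X + 1 + 0 - 1 - (a + 1 + 0) = X := by omega
      rw [e1, e2, e3]
      nlinarith
    · obtain ⟨Y, hY⟩ : ∃ Y, r = b + 1 + Y := ⟨r - 1 - b, by omega⟩
      subst hY
      have e2 : b + 1 + Y - 1 - b = Y := by omega
      have e3 : a + 1 + X + 1 + (b + 1 + Y) - 1 - (a + 1 + b) = X + Y + 1 := by omega
      rw [e1, e2, e3]
      nlinarith

lemma desL_len_fact : ∀ l : List ℕ, (desL l = 0 ∧ l.length = 0) ∨ desL l + 1 ≤ l.length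
  | [] => Or.inl ⟨rfl, rfl⟩
  | a :: t => Or.inr (by have := desL_cons_le a t; simp; omega)

/-! ### the main bounds -/

lemma mainG (f : ℕ)
    (hV : ∀ s u : List ℕ, s.Nodup → u ≠ [] → List.IsChain (· < ·) u →
      (∀ a ∈ s, ∀ b ∈ u, a < b) →
      weightAux f (s ++ u) ≤ desL s * (s.length - 1 - desL s)) :
    ∀ (N : ℕ) (s1 : List ℕ), s1.length ≤ N → s1.Nodup →
      blockSum f s1 ≤ desL s1 * (s1.length - 1 - desL s1) := by
  intro N
  induction N with
  | zero =>
    intro s1 hlen _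
    have : s1 = [] := by
      cases s1 with
      | nil => rfl
      | cons a t => simp at hlen
    subst this
    simp [blockSum_nil]
  | succ N ihN =>
    intro s1 hlen hnd
    rcases eq_or_ne s1 [] with rfl | hne
    · simp [blockSum_nil]
    obtain ⟨s, M, t, rfl, hs, ht⟩ := exists_max_split hne hnd
    have hnds : s.Nodup := (List.nodup_append.1 hnd).1
    have hndt : t.Nodup := ((List.nodup_append.1 hnd).2.1).of_cons
    have hstep : blockSum f (s ++ M :: t)
        = (desL (s ++ [M]) + weightAux f (s ++ [M])) + blockSum f t := by
      rw [blockSum, splitLeft_eq_cons hs ht, List.map_cons, List.sum_cons, blockSum]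
    have hd1 : desL (s ++ [M]) = desL s := desL_concat_lt hs
    have hwB : weightAux f (s ++ [M]) ≤ desL s * (s.length - 1 - desL s) := by
      apply hV s [M] hnds (by simp) (by simp)
      intro a ha b hb
      simp only [List.mem_singleton] at hb
      subst hb
      exact hs a ha
    have htB : blockSum f t ≤ desL t * (t.length - 1 - desL t) := by
      apply ihN t _ hndt
      have := @List.length_append _ s (M :: t)
      simp at this hlen ⊢
      omega
    have haq := desL_len_fact s
    have hbr := desL_len_fact t
    have hlenEq : (s ++ M :: t).length = s.length + 1 + t.length := by simp; omega
    have hD : (t.length = 0 ∧ desL (s ++ M :: t) = desL s)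
        ∨ (1 ≤ t.length ∧ desL (s ++ M :: t) = desL s + 1 + desL t) := by
      cases t with
      | nil => exact Or.inl ⟨rfl, by rw [desL_concat_lt hs]⟩
      | cons h t' =>
        refine Or.inr ⟨by simp, ?_⟩
        rw [desL_append_cons, desL_concat_lt hs, desL_cons_cons,
          if_pos (ht h (by simp))]
        omega
    rw [hstep, hd1, hlenEq]
    rcases hD with ⟨h0, hDe⟩ | ⟨h0, hDe⟩ <;> rw [hDe]
    · calc desL s + weightAux f (s ++ [M]) + blockSum f t
          ≤ desL s + desL s * (s.length - 1 - desL s) + desL t * (t.length - 1 - desL t) := by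
            omega
        _ ≤ desL s * (s.length + 1 + t.length - 1 - desL s) :=
            arith1 haq hbr (Or.inl ⟨h0, rfl⟩)
    · calc desL s + weightAux f (s ++ [M]) + blockSum f t
          ≤ desL s + desL s * (s.length - 1 - desL s) + desL t * (t.length - 1 - desL t) := by
            omega
        _ ≤ (desL s + 1 + desL t) * (s.length + 1 + t.length - 1 - (desL s + 1 + desL t)) :=
            arith1 haq hbr (Or.inr ⟨h0, rfl⟩)

lemma mainV : ∀ (f : ℕ) (s u : List ℕ), s.Nodup → u ≠ [] → List.IsChain (· < ·) u →
    (∀ a ∈ s, ∀ b ∈ u, a < b) →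
    weightAux f (s ++ u) ≤ desL s * (s.length - 1 - desL s) := by
  intro f
  induction f with
  | zero => intro s u _ _ _ _; exact Nat.zero_le _
  | succ f ih =>
    intro s u hnd hu hchain hcross
    rw [weightAux]
    split
    · exact Nat.zero_le _
    next hcond =>
    push_neg at hcond
    obtain ⟨hlen2, hnotsort⟩ := hcond
    have hs : s ≠ [] := by
      rintro rfl
      exact hnotsort (sorted_of_chain' (by simpa using hchain))
    obtain ⟨s1, μ, s2, hseq, hlt1, hlt2, hminle, hnotmem⟩ := exists_min_split hs hnd
    set M := (s ++ u).foldr Nat.max 0 with hM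
    have hMle : ∀ x ∈ s ++ u, x ≤ M := foldr_max_le _ _
    set u' := u ++ [M + 1] with hu'
    have hrw : (s ++ u) ++ [M + 1] = s1 ++ μ :: (s2 ++ u') := by
      rw [hseq]; simp [hu']
    have hμmem : μ ∈ s := by rw [hseq]; simp
    have hle' : ∀ x ∈ s1 ++ μ :: (s2 ++ u'), μ ≤ x := by
      intro x hx
      simp only [List.mem_append, List.mem_cons] at hx
      rcases hx with hx | rfl | hx | hx
      · exact le_of_lt (hlt1 x hx)
      · rfl
      · exact le_of_lt (hlt2 x hx)
      · rcases List.mem_append.1 hx with hx | hx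
        · exact le_of_lt (hcross μ hμmem x hx)
        · have : x = M + 1 := by simpa using hx
          subst this
          have := hMle μ (by simp [hμmem])
          omega
    rw [hrw, splitAll_eq hnotmem hle']
    simp only [List.map_append, List.sum_append, List.map_cons, List.map_nil,
      List.sum_cons, List.sum_nil, desL_single, weightAux_single]
    -- nodup pieces
    have hnd1 : s1.Nodup := by
      rw [hseq] at hnd
      exact (List.nodup_append.1 hnd).1
    have hnd2 : s2.Nodup := by
      rw [hseq] at hnd
      exact ((List.nodup_append.1 hnd).2.1).of_cons
    have hchain' : List.IsChain (· < ·) u' := by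
      rw [hu', List.isChain_append]
      refine ⟨hchain, List.isChain_singleton _, ?_⟩
      intro x hx y hy
      simp only [List.head?_cons, Option.mem_def, Option.some.injEq] at hy
      subst hy
      have hxu : x ∈ u := List.mem_of_mem_getLast? hx
      have := hMle x (by simp [hxu])
      omega
    have hcross2 : ∀ a ∈ s2, ∀ b ∈ u', a < b := by
      intro a ha b hb
      have has : a ∈ s := by rw [hseq]; simp [ha]
      rcases List.mem_append.1 hb with hb | hb
      · exact hcross a has b hb
      · have : b = M + 1 := by simpa using hb
        subst this
        have := hMle a (by simp [has])
        omega
    have hw2 : weightAux f (s2 ++ u') ≤ desL s2 * (s2.length - 1 - desL s2) :=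
      ih s2 u' hnd2 (by simp [hu']) hchain' hcross2
    have hdes2 : desL (s2 ++ u') = desL s2 := by
      rw [desL_append_all_lt hcross2, desL_chain' hchain']
      omega

    have hblock : ((splitLeft s1).map (fun p => desL p + weightAux f p)).sum
        ≤ desL s1 * (s1.length - 1 - desL s1) := by
      have := mainG f ih s1.length s1 le_rfl hnd1
      rwa [blockSum] at this
    -- compute desL s and lengths
    have hslen : s.length = s1.length + 1 + s2.length := by rw [hseq]; simp; omega
    have hD : (s1.length = 0 ∧ desL s = desL s2)
        ∨ (1 ≤ s1.length ∧ desL s = desL s1 + 1 + desL s2) := by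
      cases hs1 : s1 with
      | nil =>
        refine Or.inl ⟨by simp, ?_⟩
        rw [hseq, hs1, List.nil_append, desL_cons_min hlt2]
      | cons h1 t1 =>
        refine Or.inr ⟨by simp, ?_⟩
        rw [hseq, hs1, desL_append_cons, desL_concat_min (by simp) (hs1 ▸ hlt1),
          desL_cons_min hlt2]
    have haq := desL_len_fact s1
    have hbr := desL_len_fact s2
    calc ((splitLeft s1).map (fun p => desL p + weightAux f p)).sum + (0 + 0)
          + (desL (s2 ++ u') + weightAux f (s2 ++ u'))
        ≤ desL s1 * (s1.length - 1 - desL s1)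
          + (desL s2 + desL s2 * (s2.length - 1 - desL s2)) := by
          rw [hdes2]; omega
      _ ≤ desL s * (s.length - 1 - desL s) := by
          rw [hslen]
          rcases hD with ⟨h0, hDe⟩ | ⟨h0, hDe⟩ <;> rw [hDe]
          · have hs10 : s1.length = 0 := h0
            have : desL s1 = 0 := by
              cases s1
              · rfl
              · simp at hs10
            rw [this] at haq ⊢
            exact arith2 (Or.inl ⟨rfl, hs10⟩) hbr (Or.inl ⟨hs10, rfl⟩)
          · exact arith2 haq hbr (Or.inr ⟨h0, rfl⟩)

/-! ### top level unfold -/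

lemma topUnfold (f : ℕ) (s1 : List ℕ) (hne : s1 ≠ []) (hgt : ∀ x ∈ s1, 1 < x) :
    weightAux (f + 1) (s1 ++ [1]) = blockSum f s1 := by
  rw [weightAux]
  rw [if_neg]
  · set M := (s1 ++ [1]).foldr Nat.max 0 with hM
    have hMle : ∀ x ∈ s1 ++ [1], x ≤ M := foldr_max_le _ _
    have hrw : (s1 ++ [1]) ++ [M + 1] = s1 ++ 1 :: [M + 1] := by simp
    have hnotmem : (1 : ℕ) ∉ s1 := fun h => lt_irrefl 1 (hgt 1 h)
    have hle : ∀ x ∈ s1 ++ 1 :: [M + 1], 1 ≤ x := by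
      intro x hx
      simp only [List.mem_append, List.mem_cons, List.mem_singleton] at hx
      rcases hx with hx | rfl | hx2
      · exact le_of_lt (hgt x hx)
      · rfl
      · have : x = M + 1 := by simpa using hx2
        omega
    rw [hrw, splitAll_eq hnotmem hle]
    simp only [List.map_append, List.sum_append, List.map_cons, List.map_nil,
      List.sum_cons, List.sum_nil, desL_single, weightAux_single]
    rw [blockSum]
    omega
  · push_neg
    constructor
    · cases s1 with
      | nil => simp at hne
      | cons a t => simp
    · intro hsort
      obtain ⟨a, ha⟩ : ∃ a, a ∈ s1 := by
        cases s1 with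
        | nil => simp at hne
        | cons a t => exact ⟨a, by simp⟩
      have : a < 1 := by
        have := (List.pairwise_append.1 hsort).2.2
        exact this a ha 1 (by simp)
      have := hgt a ha
      omega

/-! ### upper bound -/

lemma upperBound (n d : ℕ) (hn : 2 ≤ n) (hd1 : 1 ≤ d) (hd : d ≤ n - 1)
    (l : List ℕ) (hperm : IsPermList n l) (hlast : l.getLast? = some 1)
    (hdes : desL l = d) : weightL l ≤ (d - 1) * (n - d - 1) := by
  have hlen : l.length = n := by
    have := hperm.length_eq
    simpa using this
  have hnd : l.Nodup := hperm.nodup_iff.2 List.nodup_range'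
  have hmem : ∀ x ∈ l, 1 ≤ x := by
    intro x hx
    have : x ∈ List.range' 1 n := hperm.mem_iff.1 hx
    exact (List.mem_range'_1.1 this).1
  have hlne : l ≠ [] := by
    intro h
    rw [h] at hlast
    simp at hlast
  have hlast' : l.getLast hlne = 1 := by
    rw [List.getLast?_eq_getLast hlne] at hlast
    exact Option.some_injective _ hlast
  have hdecomp : l = l.dropLast ++ [1] := by
    conv_lhs => rw [← List.dropLast_concat_getLast hlne]
    rw [hlast']
  set s1 := l.dropLast with hs1
  have hs1len : s1.length = n - 1 := by
    rw [hs1, List.length_dropLast, hlen]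
  have hs1ne : s1 ≠ [] := by
    intro h
    rw [← List.length_eq_zero_iff] at h  -- s1.length = 0
    omega
  have hnotmem : (1 : ℕ) ∉ s1 := by
    intro h
    rw [hdecomp] at hnd
    simp only [List.nodup_append, List.nodup_cons] at hnd
    exact hnd.2.2 1 h 1 (by simp) rfl
  have hgt : ∀ x ∈ s1, 1 < x := by
    intro x hx
    have h1 : x ∈ l := by rw [hdecomp]; simp [hx]
    have := hmem x h1
    rcases eq_or_lt_of_le this with rfl | h
    · exact absurd hx hnotmem
    · exact h
  have hnd1 : s1.Nodup := by
    rw [hdecomp] at hnd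
    exact (List.nodup_append.1 hnd).1
  have hdes1 : desL s1 = d - 1 := by
    have : desL (s1 ++ [1]) = desL s1 + 1 := desL_concat_min hs1ne hgt
    rw [← hdecomp] at this
    omega
  obtain ⟨K, hK⟩ : ∃ K, (l.length + 2) ^ 2 = K + 1 := ⟨(l.length + 2) ^ 2 - 1, by
    have : 0 < (l.length + 2) ^ 2 := by positivity
    omega⟩
  calc weightL l = weightAux (K + 1) (s1 ++ [1]) := by
        rw [weightL, hK, ← hdecomp]
    _ = blockSum K s1 := topUnfold K s1 hs1ne hgt
    _ ≤ desL s1 * (s1.length - 1 - desL s1) :=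
        mainG K (mainV K) s1.length s1 le_rfl hnd1
    _ = (d - 1) * (n - d - 1) := by
        rw [hdes1, hs1len]
        congr 1
        omega

/-! ### witness helpers -/

lemma chain'_range' (c k : ℕ) : List.IsChain (· < ·) (List.range' c k) :=
  List.isChain_iff_pairwise.2 (List.pairwise_lt_range' (s := c) (n := k))

lemma chain'_gt_reverse_range' (c k : ℕ) :
    List.IsChain (· > ·) ((List.range' c k).reverse) := by
  rw [List.isChain_reverse]
  exact (chain'_range' c k).imp (fun {a b} h => h)

lemma desL_reverse_range' : ∀ (k c : ℕ), desL ((List.range' c k).reverse) = k - 1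
  | 0, c => rfl
  | 1, c => rfl
  | k + 2, c => by
    have h1 : List.range' c (k + 2) = c :: List.range' (c + 1) (k + 1) :=
      List.range'_succ
    rw [h1, List.reverse_cons,
      desL_concat_min (by simp) (fun x hx => by
        have := List.mem_range'_1.1 (List.mem_reverse.1 hx)
        omega),
      desL_reverse_range' (k + 1) (c + 1)]
    omega

lemma desL_shape {c m d : ℕ} (hd : 1 ≤ d) {u : List ℕ}
    (hchain : List.IsChain (· < ·) u) (hcross : ∀ x ∈ u, c + m + d ≤ x) :
    desL (List.range' c m ++ (List.range' (c + m) d).reverse ++ u) = d - 1 := by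
  rw [List.append_assoc, desL_append_all_lt (fun x hx y hy => by
      have hx' := List.mem_range'_1.1 hx
      rcases List.mem_append.1 hy with hy | hy
      · have := List.mem_range'_1.1 (List.mem_reverse.1 hy)
        omega
      · have := hcross y hy
        omega),
    desL_append_all_lt (fun x hx y hy => by
      have := List.mem_range'_1.1 (List.mem_reverse.1 hx)
      have := hcross y hy
      omega),
    desL_chain' (chain'_range' c m), desL_chain' hchain,
    desL_reverse_range' d (c + m)]
  omega

/-- The key exact-value computation for the witness family. -/
lemma witKey (d : ℕ) (hd1 : 1 ≤ d) : ∀ (m f c : ℕ) (u : List ℕ), m + 2 ≤ f → u ≠ [] →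
    List.IsChain (· < ·) u → (∀ x ∈ u, c + m + d ≤ x) →
    weightAux f (List.range' c m ++ (List.range' (c + m) d).reverse ++ u)
      = (d - 1) * m := by
  intro m
  induction m with
  | zero =>
    intro f c u hf hu hchain hcross
    obtain ⟨f', rfl⟩ : ∃ f', f = f' + 1 := ⟨f - 1, by omega⟩
    set l := List.range' c 0 ++ (List.range' (c + 0) d).reverse ++ u with hl
    have hdl : desL l = d - 1 := desL_shape hd1 hchain hcross
    rw [weightAux]
    split
    · simp
    next hcond =>
    push_neg at hcond
    obtain ⟨-, hnotsort⟩ := hcond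
    obtain ⟨d', rfl⟩ : ∃ d', d = d' + 1 := ⟨d - 1, by omega⟩
    have hD : (List.range' (c + 0) (d' + 1)).reverse
        = (List.range' (c + 1) d').reverse ++ [c] := by
      rw [show c + 0 = c from rfl, List.range'_succ, List.reverse_cons]
    obtain ⟨M, hM⟩ : ∃ M, l.foldr Nat.max 0 = M := ⟨_, rfl⟩
    rw [hM]
    have hMle : ∀ x ∈ l, x ≤ M := hM ▸ foldr_max_le l 0
    have hcmem : c ∈ l := by
      rw [hl, hD]; simp
    have hrw : l ++ [M + 1]
        = (List.range' (c + 1) d').reverse ++ c :: (u ++ [M + 1]) := by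
      rw [hl, hD]
      simp
    have hnotmem : c ∉ (List.range' (c + 1) d').reverse := by
      intro h
      have := List.mem_range'_1.1 (List.mem_reverse.1 h)
      omega
    have hle : ∀ x ∈ (List.range' (c + 1) d').reverse ++ c :: (u ++ [M + 1]), c ≤ x := by
      intro x hx
      simp only [List.mem_append, List.mem_cons, List.mem_reverse,
        List.mem_singleton] at hx
      rcases hx with hx | rfl | hx | hx2
      · have := List.mem_range'_1.1 hx; omega
      · rfl
      · have := hcross x hx; omega
      · have : x = M + 1 := by simpa using hx2
        have := hMle c hcmem
        omega
    rw [hrw, splitAll_eq hnotmem hle]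
    have hchain2 : List.IsChain (· < ·) (u ++ [M + 1]) := by
      rw [List.isChain_append]
      refine ⟨hchain, List.isChain_singleton _, ?_⟩
      intro x hx y hy
      simp only [List.head?_cons, Option.mem_def, Option.some.injEq] at hy
      subst hy
      have hxu : x ∈ u := List.mem_of_mem_getLast? hx
      have : x ∈ l := by rw [hl]; simp [hxu]
      have := hMle x this
      omega
    have hsorted2 : (u ++ [M + 1]).Pairwise (· < ·) := sorted_of_chain' hchain2
    simp only [List.map_append, List.sum_append, List.map_cons, List.map_nil,
      List.sum_cons, List.sum_nil, desL_single, weightAux_single]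
    have hblock : ((splitLeft (List.range' (c + 1) d').reverse).map
        (fun p => desL p + weightAux f' p)).sum = 0 := by
      have := blockSum_decreasing f' (chain'_gt_reverse_range' (c + 1) d')
      rwa [blockSum] at this
    rw [hblock, desL_chain' hchain2,
      weightAux_of_short_or_sorted (Or.inr hsorted2) f']
    simp
  | succ m ihm =>
    intro f c u hf hu hchain hcross
    obtain ⟨f', rfl⟩ : ∃ f', f = f' + 1 := ⟨f - 1, by omega⟩
    set l := List.range' c (m + 1) ++ (List.range' (c + (m + 1)) d).reverse ++ u with hl
    have hdl : desL l = d - 1 := desL_shape hd1 hchain hcross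
    have hlu : 0 < u.length := List.length_pos_iff.2 hu
    rw [weightAux]
    split
    next hcond =>
      rcases hcond with hlen | hsort
      · exfalso
        rw [hl] at hlen
        simp only [List.length_append, List.length_reverse, List.length_range'] at hlen
        omega
      · have h0 : desL l = 0 := desL_chain' (List.isChain_iff_pairwise.2 hsort)
        rw [h0] at hdl
        have : d = 1 := by omega
        rw [this]
        simp
    next hcond =>
    push_neg at hcond
    obtain ⟨M, hM⟩ : ∃ M, l.foldr Nat.max 0 = M := ⟨_, rfl⟩
    rw [hM]
    have hMle : ∀ x ∈ l, x ≤ M := hM ▸ foldr_max_le l 0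
    have hA : List.range' c (m + 1) = c :: List.range' (c + 1) m := List.range'_succ
    have hrw : l ++ [M + 1]
        = ([] : List ℕ) ++ c :: (List.range' (c + 1) m
          ++ (List.range' (c + 1 + m) d).reverse ++ (u ++ [M + 1])) := by
      rw [hl, hA, show c + (m + 1) = c + 1 + m by omega]
      simp
    have htop : c + m + d ∈ l := by
      rw [hl]
      have : c + m + d ∈ (List.range' (c + (m + 1)) d).reverse := by
        rw [List.mem_reverse]
        exact List.mem_range'_1.2 ⟨by omega, by omega⟩
      simp [this]
    have hle : ∀ x ∈ ([] : List ℕ) ++ c :: (List.range' (c + 1) m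
        ++ (List.range' (c + 1 + m) d).reverse ++ (u ++ [M + 1])), c ≤ x := by
      intro x hx
      simp only [List.nil_append, List.mem_cons, List.mem_append,
        List.mem_reverse, List.mem_singleton] at hx
      rcases hx with rfl | ⟨hx | hx⟩ | hx | hx2
      · rfl
      · have := List.mem_range'_1.1 hx; omega
      · have := List.mem_range'_1.1 hx; omega
      · have := hcross x hx; omega
      · have : x = M + 1 := by simpa using hx2
        have := hMle _ htop
        omega
    rw [hrw, splitAll_eq (by simp) hle]
    have hchain2 : List.IsChain (· < ·) (u ++ [M + 1]) := by
      rw [List.isChain_append]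
      refine ⟨hchain, List.isChain_singleton _, ?_⟩
      intro x hx y hy
      simp only [List.head?_cons, Option.mem_def, Option.some.injEq] at hy
      subst hy
      have hxu : x ∈ u := List.mem_of_mem_getLast? hx
      have : x ∈ l := by rw [hl]; simp [hxu]
      have := hMle x this
      omega
    have hcross2 : ∀ x ∈ u ++ [M + 1], c + 1 + m + d ≤ x := by
      intro x hx
      rcases List.mem_append.1 hx with hx | hx
      · have := hcross x hx; omega
      · have : x = M + 1 := by simpa using hx
        subst this
        have := hMle _ htop
        omega
    have hrec := ihm f' (c + 1) (u ++ [M + 1]) (by omega) (by simp) hchain2 hcross2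
    have hdes3 : desL (List.range' (c + 1) m ++ (List.range' (c + 1 + m) d).reverse
        ++ (u ++ [M + 1])) = d - 1 := desL_shape hd1 hchain2 hcross2
    have hsplitnil : splitLeft ([] : List ℕ) = [] := rfl
    rw [hsplitnil]
    simp only [List.map_nil, List.sum_nil, List.map_cons, List.map_append,
      List.sum_cons, List.sum_append, desL_single, weightAux_single,
      List.nil_append]
    rw [hrec, hdes3]
    have h2 : (d - 1) * (m + 1) = (d - 1) + (d - 1) * m := by ring
    omega

/-! ### witnesses -/

lemma witnessDesc (n : ℕ) (hn : 2 ≤ n) :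
    IsPermList n (List.range' 1 n).reverse ∧
    (List.range' 1 n).reverse.getLast? = some 1 ∧
    desL (List.range' 1 n).reverse = n - 1 ∧
    weightL (List.range' 1 n).reverse = 0 := by
  obtain ⟨k, rfl⟩ : ∃ k, n = k + 2 := ⟨n - 2, by omega⟩
  have hsplit : List.range' 1 (k + 2) = 1 :: List.range' 2 (k + 1) :=
    List.range'_succ
  have hrev : (List.range' 1 (k + 2)).reverse
      = (List.range' 2 (k + 1)).reverse ++ [1] := by
    rw [hsplit, List.reverse_cons]
  refine ⟨List.reverse_perm _, ?_, ?_, ?_⟩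
  · rw [hrev, List.getLast?_concat]
  · exact desL_reverse_range' (k + 2) 1
  · have hlen : (List.range' 1 (k + 2)).reverse.length = k + 2 := by simp
    obtain ⟨K, hK⟩ : ∃ K, (k + 2 + 2) ^ 2 = K + 1 := ⟨(k + 2 + 2) ^ 2 - 1, by
      have : 0 < (k + 2 + 2) ^ 2 := by positivity
      omega⟩
    rw [weightL, hlen, hK, hrev, topUnfold K _ (by simp) (fun x hx => by
      have := List.mem_range'_1.1 (List.mem_reverse.1 hx)
      omega)]
    exact blockSum_decreasing K (chain'_gt_reverse_range' 2 (k + 1))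

lemma witnessGen (n d : ℕ) (hd1 : 1 ≤ d) (hd : d ≤ n - 2) (hn : 3 ≤ n) :
    IsPermList n (List.range' 2 (n - d - 2) ++ (List.range' (n - d) d).reverse
      ++ [n] ++ [1]) ∧
    (List.range' 2 (n - d - 2) ++ (List.range' (n - d) d).reverse
      ++ [n] ++ [1]).getLast? = some 1 ∧
    desL (List.range' 2 (n - d - 2) ++ (List.range' (n - d) d).reverse
      ++ [n] ++ [1]) = d ∧
    weightL (List.range' 2 (n - d - 2) ++ (List.range' (n - d) d).reverse
      ++ [n] ++ [1]) = (d - 1) * (n - d - 1) := by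
  set m : ℕ := n - d - 2 with hm
  have h2m : 2 + m = n - d := by omega
  set A : List ℕ := List.range' 2 m with hA
  set D : List ℕ := (List.range' (n - d) d).reverse with hD
  set s1 : List ℕ := A ++ D ++ [n] with hs1
  have hDmem : ∀ x ∈ D, n - d ≤ x ∧ x < n := by
    intro x hx
    have := List.mem_range'_1.1 (List.mem_reverse.1 hx)
    omega
  have hAmem : ∀ x ∈ A, 2 ≤ x ∧ x < n - d := by
    intro x hx
    have := List.mem_range'_1.1 hx
    omega
  have hgt : ∀ x ∈ s1, 1 < x := by
    intro x hx
    rw [hs1] at hx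
    simp only [List.mem_append, List.mem_singleton] at hx
    rcases hx with (hx | hx) | rfl
    · exact lt_of_lt_of_le one_lt_two (hAmem x hx).1
    · have := (hDmem x hx).1; omega
    · omega
  have hs1ne : s1 ≠ [] := by rw [hs1]; simp
  have hdes1 : desL s1 = d - 1 := by
    have := desL_shape (c := 2) (m := m) (d := d) hd1 (u := [n])
      (List.isChain_singleton n) (fun x hx => by
        simp only [List.mem_singleton] at hx
        subst hx
        omega)
    rw [h2m] at this
    rw [hs1, hA, hD, List.append_assoc, ← List.append_assoc]
    exact this
  have hlast : (s1 ++ [1]).getLast? = some 1 := List.getLast?_concat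
  have hdes : desL (s1 ++ [1]) = d := by
    rw [desL_concat_min hs1ne hgt, hdes1]
    omega
  have hlen : (s1 ++ [1]).length = n := by
    rw [hs1, hA, hD]
    simp
    omega
  have hperm : IsPermList n (s1 ++ [1]) := by
    rw [IsPermList]
    have t1 : (s1 ++ [1]).Perm (1 :: s1) := List.perm_append_comm
    have t2 : s1.Perm (List.range' 2 (n - 1)) := by
      have e1 : A ++ List.range' (n - d) d = List.range' 2 (n - 2) := by
        rw [hA, ← h2m, List.range'_append_1]
        congr 1
        omega
      have e2 : List.range' 2 (n - 2) ++ [n] = List.range' 2 (n - 1) := by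
        have : [n] = List.range' (2 + (n - 2)) 1 := by
          simp [List.range'_one]
          omega
        rw [this, List.range'_append_1]
        congr 1
        omega
      rw [hs1, List.append_assoc]
      refine List.Perm.trans
        (List.Perm.append_left A ((List.reverse_perm _).append_right [n])) ?_
      rw [← List.append_assoc, e1, e2]
    have e3 : List.range' 1 n = 1 :: List.range' 2 (n - 1) := by
      obtain ⟨k, hk⟩ : ∃ k, n = k + 1 := ⟨n - 1, by omega⟩
      subst hk
      rw [List.range'_succ]
      simp
    rw [e3]
    exact t1.trans (t2.cons 1)
  refine ⟨hperm, hlast, hdes, ?_⟩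
  obtain ⟨K, hK⟩ : ∃ K, (n + 2) ^ 2 = K + 1 := ⟨(n + 2) ^ 2 - 1, by
    have : 0 < (n + 2) ^ 2 := by positivity
    omega⟩
  have hKbig : m + 2 ≤ K := by
    have : n + 4 ≤ (n + 2) ^ 2 := by nlinarith
    omega
  have hsplitL : splitLeft s1 = [s1] := by
    have : splitLeft ((A ++ D) ++ n :: []) = ((A ++ D) ++ [n]) :: splitLeft [] := by
      apply splitLeft_eq_cons
      · intro x hx
        rcases List.mem_append.1 hx with hx | hx
        · have := hAmem x hx; omega
        · have := (hDmem x hx).2; omega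
      · simp
      
    rw [hs1]
    simpa [show splitLeft ([] : List ℕ) = [] from rfl] using this
  have hwit : weightAux K s1 = (d - 1) * m := by
    have := witKey d hd1 m K 2 [n] hKbig (by simp) (List.isChain_singleton n)
      (fun x hx => by
        simp only [List.mem_singleton] at hx
        subst hx
        omega)
    rw [h2m] at this
    rw [hs1, hA, hD]
    exact this
  have : weightL (s1 ++ [1]) = blockSum K s1 := by
    rw [weightL, hlen, hK]
    exact topUnfold K s1 hs1ne hgt
  rw [this, blockSum, hsplitL]
  simp only [List.map_cons, List.map_nil, List.sum_cons, List.sum_nil]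
  rw [hdes1, hwit]
  have : (d - 1) * (n - d - 1) = (d - 1) + (d - 1) * m := by
    rw [hm]
    have e : n - d - 1 = (n - d - 2) + 1 := by omega
    rw [e]
    ring
  omega

/-- The maximum weight over permutations of length `n` with `d` descents whose
last entry is `1` is `(d-1)(n-d-1)`. -/
theorem maxwt_lastOne (n d : ℕ) (hn : 2 ≤ n) (hd1 : 1 ≤ d) (hd : d ≤ n - 1) :
    IsGreatest {m | ∃ l : List ℕ, IsPermList n l ∧ l.getLast? = some 1 ∧
      desL l = d ∧ weightL l = m} ((d - 1) * (n - d - 1)) := by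
  constructor
  · by_cases hcase : d = n - 1
    · obtain ⟨h1, h2, h3, h4⟩ := witnessDesc n hn
      refine ⟨(List.range' 1 n).reverse, h1, h2, by omega, ?_⟩
      rw [h4]
      have : n - d - 1 = 0 := by omega
      rw [this]
      ring
    · have hd2 : d ≤ n - 2 := by omega
      have hn3 : 3 ≤ n := by omega
      obtain ⟨h1, h2, h3, h4⟩ := witnessGen n d hd1 hd2 hn3
      exact ⟨_, h1, h2, h3, h4⟩
  · rintro x ⟨l, hperm, hlast, hdes, rfl⟩
    exact upperBound n d hn hd1 hd l hperm hlast hdes
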